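/- Fix a probability measure μ and events S₁,...,S_m. Suppose there are constants ε ≥ 0 such that for each k ≥ 2, |μ(S₁∩...∩S_k) − μ(S₁∩...∩S_{k−1})·μ(S_k)| ≤ ε·μ(S₁∩...∩S_{k−1}). Then μ(S₁∩...∩S_m) ≤ Π_{i=1}^m (μ(S_i) + ε), and |μ(S₁∩...∩S_m) − Π_{i=1}^m μ(S_i)| ≤ m · (ε / min_i μ(S_i)) · Π_{i=1}^m (μ(S_i) + ε), provided min_i μ(S_i) > 0. -/

import Mathlib

open MeasureTheory Finset

/-- the abstract inductive decorrelation estimate.  If a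
probability measure approximately factorizes over successive intersections of
events `S₁, …, S_m` with error `ε`, then the full intersection is bounded by
`Π (μ(Sᵢ) + ε)` and differs from `Π μ(Sᵢ)` by at most
`m · (ε / minᵢ μ(Sᵢ)) · Π (μ(Sᵢ) + ε)`, provided `minᵢ μ(Sᵢ) > 0`. -/
theorem stmt11 {Ω : Type*} [MeasurableSpace Ω] (μ : Measure Ω)
    [IsProbabilityMeasure μ] (m : ℕ) (hm : 0 < m) (S : ℕ → Set Ω) (ε : ℝ)
    (hε : 0 ≤ ε)
    (hfact : ∀ k, 2 ≤ k → k ≤ m →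
      |(μ (⋂ i ∈ range k, S i)).toReal -
          (μ (⋂ i ∈ range (k - 1), S i)).toReal * (μ (S (k - 1))).toReal| ≤
        ε * (μ (⋂ i ∈ range (k - 1), S i)).toReal)
    (hmin : 0 < (range m).inf' (Finset.nonempty_range_iff.mpr hm.ne')
        (fun i => (μ (S i)).toReal)) :
    (μ (⋂ i ∈ range m, S i)).toReal ≤ ∏ i ∈ range m, ((μ (S i)).toReal + ε) ∧
      |(μ (⋂ i ∈ range m, S i)).toReal - ∏ i ∈ range m, (μ (S i)).toReal| ≤
        (m : ℝ) *
          (ε / (range m).inf' (Finset.nonempty_range_iff.mpr hm.ne')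
            (fun i => (μ (S i)).toReal)) *
          ∏ i ∈ range m, ((μ (S i)).toReal + ε) := by
  set δ := (range m).inf' (Finset.nonempty_range_iff.mpr hm.ne')
      (fun i => (μ (S i)).toReal) with hδdef
  have hδle : ∀ i, i < m → δ ≤ (μ (S i)).toReal := fun i hi =>
    Finset.inf'_le _ (mem_range.mpr hi)
  have hεδ : 0 ≤ ε / δ := div_nonneg hε hmin.le
  have hp0 : ∀ i : ℕ, (0:ℝ) ≤ (μ (S i)).toReal := fun i => ENNReal.toReal_nonneg
  have hprod0 : ∀ k : ℕ, (0:ℝ) ≤ ∏ i ∈ range k, ((μ (S i)).toReal + ε) :=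
    fun k => Finset.prod_nonneg fun i _ => add_nonneg (hp0 i) hε
  have key : ∀ k, 1 ≤ k → k ≤ m →
      (μ (⋂ i ∈ range k, S i)).toReal ≤ ∏ i ∈ range k, ((μ (S i)).toReal + ε) ∧
      |(μ (⋂ i ∈ range k, S i)).toReal - ∏ i ∈ range k, (μ (S i)).toReal| ≤
        (k : ℝ) * (ε / δ) * ∏ i ∈ range k, ((μ (S i)).toReal + ε) := by
    intro k hk1
    induction k, hk1 using Nat.le_induction with
    | base =>
      intro _
      simp only [Finset.range_one, Finset.mem_singleton, Set.iInter_iInter_eq_left,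
        Finset.prod_singleton, Nat.cast_one, one_mul]
      constructor
      · exact le_add_of_nonneg_right hε
      · rw [sub_self, abs_zero]
        exact mul_nonneg hεδ (add_nonneg (hp0 0) hε)
    | succ n hn ih =>
      intro hnm
      obtain ⟨ih1, ih2⟩ := ih (le_of_lt hnm)
      set Pn := (μ (⋂ i ∈ range n, S i)).toReal with hPn
      set Pk := (μ (⋂ i ∈ range (n+1), S i)).toReal with hPk
      set pn := (μ (S n)).toReal with hpn
      have hfac := hfact (n+1) (by omega) hnm
      simp only [Nat.add_sub_cancel] at hfac
      have hPn0 : (0:ℝ) ≤ Pn := ENNReal.toReal_nonneg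
      have hδn := hδle n (by omega)
      rw [Finset.prod_range_succ, Finset.prod_range_succ]
      have hPn' : Pn ≤ ∏ i ∈ range n, ((μ (S i)).toReal + ε) := ih1
      have hprodn := hprod0 n
      constructor
      · have h1 : Pk ≤ Pn * pn + ε * Pn := by
          have := abs_le.mp hfac
          linarith [this.2]
        calc Pk ≤ Pn * (pn + ε) := by nlinarith
          _ ≤ (∏ i ∈ range n, ((μ (S i)).toReal + ε)) * (pn + ε) := by
              apply mul_le_mul_of_nonneg_right hPn'
              exact add_nonneg (hp0 n) hε
      · have tri : |Pk - (∏ i ∈ range n, (μ (S i)).toReal) * pn| ≤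
            |Pk - Pn * pn| + pn * |Pn - ∏ i ∈ range n, (μ (S i)).toReal| := by
          have : Pk - (∏ i ∈ range n, (μ (S i)).toReal) * pn =
              (Pk - Pn * pn) + (Pn - ∏ i ∈ range n, (μ (S i)).toReal) * pn := by ring
          rw [this]
          refine (abs_add_le _ _).trans ?_
          rw [abs_mul, abs_of_nonneg (hp0 n)]
          ring_nf
          linarith
        have h1 : ε * Pn ≤ (ε / δ) * ((∏ i ∈ range n, ((μ (S i)).toReal + ε)) * (pn + ε)) := by
          have hεle : ε ≤ (ε / δ) * (pn + ε) := by
            have h : ε / δ * δ ≤ ε / δ * (pn + ε) :=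
              mul_le_mul_of_nonneg_left (by linarith) hεδ
            rwa [div_mul_cancel₀ ε hmin.ne'] at h
          calc ε * Pn ≤ ε * ∏ i ∈ range n, ((μ (S i)).toReal + ε) :=
                mul_le_mul_of_nonneg_left hPn' hε
            _ ≤ ((ε / δ) * (pn + ε)) * ∏ i ∈ range n, ((μ (S i)).toReal + ε) :=
                mul_le_mul_of_nonneg_right hεle hprodn
            _ = (ε / δ) * ((∏ i ∈ range n, ((μ (S i)).toReal + ε)) * (pn + ε)) := by ring
        have h2 : pn * |Pn - ∏ i ∈ range n, (μ (S i)).toReal| ≤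
            (n : ℝ) * (ε / δ) * ((∏ i ∈ range n, ((μ (S i)).toReal + ε)) * (pn + ε)) := by
          calc pn * |Pn - ∏ i ∈ range n, (μ (S i)).toReal|
              ≤ pn * ((n : ℝ) * (ε / δ) * ∏ i ∈ range n, ((μ (S i)).toReal + ε)) :=
                mul_le_mul_of_nonneg_left ih2 (hp0 n)
            _ ≤ (pn + ε) * ((n : ℝ) * (ε / δ) * ∏ i ∈ range n, ((μ (S i)).toReal + ε)) := by
                apply mul_le_mul_of_nonneg_right (by linarith)
                positivity
            _ = (n : ℝ) * (ε / δ) * ((∏ i ∈ range n, ((μ (S i)).toReal + ε)) * (pn + ε)) := by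
                ring
        have := tri.trans (by linarith [hfac] :
          |Pk - Pn * pn| + pn * |Pn - ∏ i ∈ range n, (μ (S i)).toReal| ≤
            ((n:ℝ) + 1) * (ε / δ) * ((∏ i ∈ range n, ((μ (S i)).toReal + ε)) * (pn + ε)))
        push_cast
        linarith
  exact key m hm le_rfl
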